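/- In a binary fork-join computation dag executed under a work-stealing scheduler, for any task τ (the original task or a stolen subtask) that incurs steals of subtasks τ₁, ..., τ_k, there exists a root-to-final-node path P_τ in τ's computation dag such that the parent (fork node) of every stolen subtask τ_i lies on P_τ, and every right child of a fork node on P_τ that is off the path is the start node of a stolen subtask. -/

import Mathlib

open Classical in
noncomputable def stealStep (stolen : Set (List Bool)) (u : List Bool) : List Bool :=
  if u ++ [true] ∈ stolen then u ++ [false] else u ++ [true]

noncomputable def stealPath (stolen : Set (List Bool)) : ℕ → List Bool
  | 0 => []
  | n + 1 => stealStep stolen (stealPath stolen n)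

lemma stealStep_length (stolen : Set (List Bool)) (u : List Bool) :
    (stealStep stolen u).length = u.length + 1 := by
  unfold stealStep; split <;> simp

lemma stealPath_length (stolen : Set (List Bool)) (n : ℕ) :
    (stealPath stolen n).length = n := by
  induction n with
  | zero => rfl
  | succ n ih => simp [stealPath, stealStep_length, ih]

lemma stealStep_prefix (stolen : Set (List Bool)) (u : List Bool) :
    u <+: stealStep stolen u := by
  unfold stealStep; split <;> exact ⟨_, rfl⟩

lemma stealPath_mono (stolen : Set (List Bool)) {n m : ℕ} (h : n ≤ m) :
    stealPath stolen n <+: stealPath stolen m := by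
  induction m with
  | zero => simp_all
  | succ m ih =>
    rcases Nat.lt_or_ge n (m+1) with h' | h'
    · exact (ih (Nat.lt_succ_iff.mp h')).trans (stealStep_prefix _ _)
    · have : n = m + 1 := le_antisymm h h'
      subst this; exact List.prefix_rfl

lemma stealStep_spec (stolen : Set (List Bool)) (u : List Bool) :
    (u ++ [true] ∈ stolen ∧ stealStep stolen u = u ++ [false]) ∨
    (u ++ [true] ∉ stolen ∧ stealStep stolen u = u ++ [true]) := by
  unfold stealStep; split
  · exact Or.inl ⟨by assumption, rfl⟩
  · exact Or.inr ⟨by assumption, rfl⟩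

theorem steal_path_fact (stolen : Set (List Bool)) (hfin : stolen.Finite)
    (hright : ∀ v ∈ stolen, ∃ u : List Bool, v = u ++ [true])
    (hdeque : ∀ u w : List Bool,
      w ++ [true] ∈ stolen → (u ++ [false]) <+: w → u ++ [true] ∈ stolen)
    (hnonest : ∀ v ∈ stolen, ∀ w ∈ stolen, v <+: w → v = w) :
    ∃ P : List Bool,
      (∀ v ∈ stolen, ∃ u : List Bool, v = u ++ [true] ∧ u <+: P) ∧
      (∀ u : List Bool, (u ++ [false]) <+: P → u ++ [true] ∈ stolen) := by
  classical
  set N := hfin.toFinset.sup List.length with hN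
  refine ⟨stealPath stolen N, ?_, ?_⟩
  · intro v hv
    obtain ⟨w, rfl⟩ := hright v hv
    refine ⟨w, rfl, ?_⟩
    -- w.length ≤ N
    have hlen : w.length + 1 ≤ N := by
      have h := Finset.le_sup (f := List.length) (hfin.mem_toFinset.mpr hv)
      have h2 : (w ++ [true]).length = w.length + 1 := by simp
      omega
    -- key induction: stealPath k is a prefix of w for all k ≤ w.length
    have key : ∀ k, k ≤ w.length → stealPath stolen k <+: w := by
      intro k
      induction k with
      | zero => intro _; exact List.nil_prefix
      | succ k ih =>
        intro hk
        have hpre : stealPath stolen k <+: w := ih (Nat.le_of_succ_le hk)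
        have hne : stealPath stolen k ≠ w := by
          intro h
          have := stealPath_length stolen k
          rw [h] at this
          omega
        obtain ⟨t, ht⟩ := hpre
        have htne : t ≠ [] := by
          intro h; apply hne; simp [h] at ht; exact ht
        obtain ⟨b, t', rfl⟩ := List.exists_cons_of_ne_nil htne
        have hbw : stealPath stolen k ++ [b] <+: w :=
          ⟨t', by simpa using ht⟩
        rcases stealStep_spec stolen (stealPath stolen k) with ⟨hs, he⟩ | ⟨hs, he⟩
        · -- stolen right child: path goes left; must have b = false
          cases b with
          | false => rw [show stealPath stolen (k+1) = _ from he]; exact hbw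
          | true =>
            -- stealPath k ++ [true] ∈ stolen and is a prefix of w ++ [true] ∈ stolen
            have hpre2 : stealPath stolen k ++ [true] <+: w ++ [true] :=
              hbw.trans ⟨[true], rfl⟩
            have := hnonest _ hs _ hv hpre2
            have hkw : stealPath stolen k = w := by
              simpa using this
            exact absurd hkw hne
        · -- right child not stolen: path goes right; must have b = true
          cases b with
          | true => rw [show stealPath stolen (k+1) = _ from he]; exact hbw
          | false =>
            exact absurd (hdeque (stealPath stolen k) w hv hbw) hs
    have hw : stealPath stolen w.length = w := by
      have h1 := key w.length le_rfl
      exact List.IsPrefix.eq_of_length h1 (stealPath_length stolen w.length)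
    calc w = stealPath stolen w.length := hw.symm
      _ <+: stealPath stolen N := stealPath_mono stolen (by omega)
  · intro u hu
    set k := u.length with hk
    have hkN : k + 1 ≤ N := by
      have := hu.length_le
      simp [stealPath_length] at this
      omega
    -- u = stealPath k
    have h1 : stealPath stolen k <+: stealPath stolen N := stealPath_mono stolen (by omega)
    have h2 : u <+: stealPath stolen k :=
      List.prefix_of_prefix_length_le ((List.prefix_append u [false]).trans hu) h1
        (by simp [stealPath_length, hk])
    have hu_eq : u = stealPath stolen k := h2.eq_of_length (by simp [stealPath_length, hk])
    -- step at k must be false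
    have h3 : stealPath stolen (k+1) <+: stealPath stolen N := stealPath_mono stolen hkN
    have h4 : u ++ [false] = stealPath stolen (k+1) := by
      have hp : u ++ [false] <+: stealPath stolen (k+1) :=
        List.prefix_of_prefix_length_le hu h3 (by simp [stealPath_length, hk])
      exact hp.eq_of_length (by simp [stealPath_length, hk])
    rcases stealStep_spec stolen (stealPath stolen k) with ⟨hs, _⟩ | ⟨_, he⟩
    · rwa [← hu_eq] at hs
    · exfalso
      have : u ++ [false] = stealPath stolen k ++ [true] := by
        rw [h4]; exact he
      rw [← hu_eq] at this
      simp at this
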